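/- Let T be power bounded with L-asymptotic limit A_{T,L}, and define X_+ : H → (H_0)^⊥ by X_+ h = P A_{T,L}^{1/2} h, where P is the orthogonal projection onto the orthocomplement of the stable subspace H_0 = ker A_{T,L}. Then there exists a unique isometry V on (H_0)^⊥ with V X_+ = X_+ T. -/

import Mathlib

open ContinuousLinearMap Filter Topology BoundedContinuousFunction

/-- The shift `n ↦ n + 1` as a continuous map on `ℕ`. -/
def natShift : C(ℕ, ℕ) := ⟨fun n => n + 1, continuous_of_discreteTopology⟩

/-- A Banach limit: a norm-one positive shift-invariant continuous linear functional on
the space of bounded (complex) sequences which extends the ordinary limit functional. -/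
structure IsBanachLimit (L : (ℕ →ᵇ ℂ) →L[ℂ] ℂ) : Prop where
  norm_one : ‖L‖ = 1
  lim_eq : ∀ (f : ℕ →ᵇ ℂ) (c : ℂ), Tendsto f atTop (𝓝 c) → L f = c
  pos : ∀ f : ℕ →ᵇ ℂ, (∀ n, 0 ≤ (f n).re ∧ (f n).im = 0) → 0 ≤ (L f).re ∧ (L f).im = 0
  shift_inv : ∀ f : ℕ →ᵇ ℂ, L (f.compContinuous natShift) = L f

/-- `A` is the `L`-asymptotic limit of `T`: a positive operator whose sesquilinear form is
the `L`-limit of the forms of the self-adjoint iterates `T*^n T^n`. -/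
def IsLAsymptoticLimit {H : Type*} [NormedAddCommGroup H] [InnerProductSpace ℂ H]
    [CompleteSpace H] (L : (ℕ →ᵇ ℂ) →L[ℂ] ℂ) (T A : H →L[ℂ] H) : Prop :=
  A.IsPositive ∧ ∀ (x y : H) (f : ℕ →ᵇ ℂ),
    (∀ n : ℕ, f n = (inner ℂ ((adjoint (T ^ n) ∘L T ^ n) x) y : ℂ)) →
      (inner ℂ (A x) y : ℂ) = L f

/-- Let `T` be power bounded with `L`-asymptotic limit `A`, let `S = A^{1/2}` be the
positive square root of `A`, and let `X₊ : H → (H₀)ᗮ` be `h ↦ P (S h)` where `P` is the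
orthogonal projection onto the orthocomplement of `H₀ = ker A`. Then there is a unique
isometry `V` on `(H₀)ᗮ` with `V X₊ = X₊ T`. -/
lemma key_extend {H K : Type*} [NormedAddCommGroup H] [NormedSpace ℂ H]
    [NormedAddCommGroup K] [NormedSpace ℂ K] [CompleteSpace K]
    (X W : H →L[ℂ] K) (hd : DenseRange X) (hn : ∀ x, ‖W x‖ = ‖X x‖) :
    ∃! V : K →L[ℂ] K, (∀ u, ‖V u‖ = ‖u‖) ∧ V ∘L X = W := by
  have hwd : ∀ x y : H, X x = X y → W x = W y := by
    intro x y h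
    have h1 : ‖W x - W y‖ = 0 := by
      rw [← map_sub, hn, map_sub, h, sub_self, norm_zero]
    rwa [norm_eq_zero, sub_eq_zero] at h1
  set M : Submodule ℂ K := LinearMap.range (X : H →ₗ[ℂ] K) with hM
  have hmem : ∀ m : M, ∃ x : H, X x = (m : K) := fun m => LinearMap.mem_range.mp m.2
  have hg' : ∀ (m : M) (x : H), X x = (m : K) → W (hmem m).choose = W x := by
    intro m x hx
    exact hwd _ _ ((hmem m).choose_spec.trans hx.symm)
  let f : M →ₗ[ℂ] K :=
    { toFun := fun m => W (hmem m).choose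
      map_add' := by
        intro m m'
        have h1 : X ((hmem m).choose + (hmem m').choose) = ((m + m' : M) : K) := by
          rw [map_add, (hmem m).choose_spec, (hmem m').choose_spec, Submodule.coe_add]
        exact (hg' (m + m') _ h1).trans (map_add W _ _)
      map_smul' := by
        intro c m
        have h1 : X (c • (hmem m).choose) = ((c • m : M) : K) := by
          rw [map_smul, (hmem m).choose_spec, Submodule.coe_smul]
        exact (hg' (c • m) _ h1).trans (map_smul W _ _) }
  have hfnorm : ∀ m : M, ‖f m‖ = ‖m‖ := by
    intro m
    show ‖W (hmem m).choose‖ = ‖m‖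
    rw [hn, (hmem m).choose_spec]
    rfl
  let fL : M →L[ℂ] K := f.mkContinuous 1 (fun m => by rw [hfnorm, one_mul])
  have hui : IsUniformInducing (M.subtypeL) := isometry_subtype_coe.isUniformInducing
  have hdX : Dense (M : Set K) := by
    have : Set.range ⇑X = (M : Set K) := by
      ext u; simp [hM, LinearMap.mem_range, Set.mem_range]
    rw [← this]; exact hd
  have hd' : DenseRange (M.subtypeL) := by
    have : Set.range ⇑(M.subtypeL) = (M : Set K) := Subtype.range_coe
    rw [DenseRange, this]; exact hdX
  let V : K →L[ℂ] K := fL.extend M.subtypeL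
  have hVm : ∀ m : M, V (m : K) = fL m := fun m =>
    ContinuousLinearMap.extend_eq fL hd' hui m
  have hVX : ∀ x : H, V (X x) = W x := by
    intro x
    have hx : X x ∈ M := LinearMap.mem_range.mpr ⟨x, rfl⟩
    have := hVm ⟨X x, hx⟩
    rw [this]
    exact hg' ⟨X x, hx⟩ x rfl
  have hViso : ∀ u : K, ‖V u‖ = ‖u‖ := by
    intro u
    refine hd.induction_on u (isClosed_eq (continuous_norm.comp V.continuous) continuous_norm) ?_
    intro x
    show ‖V (X x)‖ = ‖X x‖
    rw [hVX, hn]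
  refine ⟨V, ⟨hViso, by ext x; exact hVX x⟩, ?_⟩
  rintro V' ⟨hi', hc'⟩
  have : (⇑V' : K → K) = ⇑V := by
    refine hd.equalizer V'.continuous V.continuous ?_
    funext x
    show V' (X x) = V (X x)
    rw [hVX]
    exact DFunLike.congr_fun hc' x
  exact ContinuousLinearMap.coeFn_injective this

theorem stmt10 {H : Type*} [NormedAddCommGroup H] [InnerProductSpace ℂ H] [CompleteSpace H]
    (T : H →L[ℂ] H) (hT : ∃ C : ℝ, ∀ n : ℕ, ‖T ^ n‖ ≤ C)
    (L : (ℕ →ᵇ ℂ) →L[ℂ] ℂ) (hL : IsBanachLimit L)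
    (A : H →L[ℂ] H) (hA : IsLAsymptoticLimit L T A)
    (S : H →L[ℂ] H) (hS : S.IsPositive) (hSA : S ∘L S = A) :
    ∃! V : (LinearMap.ker (A : H →ₗ[ℂ] H))ᗮ →L[ℂ] (LinearMap.ker (A : H →ₗ[ℂ] H))ᗮ,
      (∀ u : (LinearMap.ker (A : H →ₗ[ℂ] H))ᗮ, ‖V u‖ = ‖u‖) ∧
      V ∘L (Submodule.orthogonalProjectionOnto (LinearMap.ker (A : H →ₗ[ℂ] H))ᗮ ∘L S) =
        (Submodule.orthogonalProjectionOnto (LinearMap.ker (A : H →ₗ[ℂ] H))ᗮ ∘L S) ∘L T := by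
  obtain ⟨C, hC⟩ := hT
  have hsa : ContinuousLinearMap.adjoint S = S := ContinuousLinearMap.isSelfAdjoint_iff'.mp hS.isSelfAdjoint
  have hSinner : ∀ x y : H, (inner ℂ (S x) y : ℂ) = inner ℂ x (S y) := by
    intro x y
    rw [← ContinuousLinearMap.adjoint_inner_left S y x, hsa]
  have hAS : ∀ x y : H, (inner ℂ (A x) y : ℂ) = inner ℂ (S x) (S y) := by
    intro x y
    rw [← hSA, ContinuousLinearMap.comp_apply, hSinner, hSinner]
  have hval : ∀ (n : ℕ) (x y : H),
      (inner ℂ ((adjoint (T ^ n) ∘L T ^ n) x) y : ℂ) = inner ℂ ((T ^ n) x) ((T ^ n) y) := by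
    intro n x y
    rw [ContinuousLinearMap.comp_apply]
    exact ContinuousLinearMap.adjoint_inner_left (T ^ n) y ((T ^ n) x)
  have hbd : ∀ x y : H, ∀ n : ℕ,
      ‖(inner ℂ ((adjoint (T ^ n) ∘L T ^ n) x) y : ℂ)‖ ≤ (C * ‖x‖) * (C * ‖y‖) := by
    intro x y n
    rw [hval]
    have hx : ‖(T ^ n) x‖ ≤ C * ‖x‖ :=
      le_trans ((T ^ n).le_opNorm x) (mul_le_mul_of_nonneg_right (hC n) (norm_nonneg x))
    have hy : ‖(T ^ n) y‖ ≤ C * ‖y‖ :=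
      le_trans ((T ^ n).le_opNorm y) (mul_le_mul_of_nonneg_right (hC n) (norm_nonneg y))
    exact le_trans (norm_inner_le_norm _ _)
      (mul_le_mul hx hy (norm_nonneg _) (le_trans (norm_nonneg _) hx))
  let F : H → H → (ℕ →ᵇ ℂ) := fun x y =>
    BoundedContinuousFunction.ofNormedAddCommGroup
      (fun n => (inner ℂ ((adjoint (T ^ n) ∘L T ^ n) x) y : ℂ))
      continuous_of_discreteTopology ((C * ‖x‖) * (C * ‖y‖)) (hbd x y)
  have hform : ∀ x y : H, (inner ℂ (A x) y : ℂ) = L (F x y) := fun x y =>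
    hA.2 x y (F x y) (fun _ => rfl)
  have hinv : ∀ x y : H, (inner ℂ (A (T x)) (T y) : ℂ) = inner ℂ (A x) y := by
    intro x y
    have h1 : ∀ n : ℕ, ((F x y).compContinuous natShift) n
        = (inner ℂ ((adjoint (T ^ n) ∘L T ^ n) (T x)) (T y) : ℂ) := by
      intro n
      have h2 : ((F x y).compContinuous natShift) n = F x y (n + 1) := rfl
      rw [h2]
      show (inner ℂ ((adjoint (T ^ (n+1)) ∘L T ^ (n+1)) x) y : ℂ) = _
      rw [hval, hval, pow_succ]
      simp [ContinuousLinearMap.mul_apply]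
    rw [hA.2 (T x) (T y) _ h1, hL.shift_inv, ← hform]
  have hSnorm : ∀ x : H, ‖S (T x)‖ = ‖S x‖ := by
    intro x
    have h1 : (inner ℂ (S (T x)) (S (T x)) : ℂ) = inner ℂ (S x) (S x) := by
      rw [← hAS, ← hAS, hinv]
    rw [inner_self_eq_norm_sq_to_K, inner_self_eq_norm_sq_to_K] at h1
    have h2 : ‖S (T x)‖ ^ 2 = ‖S x‖ ^ 2 := by exact_mod_cast h1
    nlinarith [norm_nonneg (S (T x)), norm_nonneg (S x)]
  have hker : LinearMap.ker (A : H →ₗ[ℂ] H) = LinearMap.ker (S : H →ₗ[ℂ] H) := by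
    ext x
    simp only [LinearMap.mem_ker, ContinuousLinearMap.coe_coe]
    constructor
    · intro h
      have h2 : (inner ℂ (S x) (S x) : ℂ) = 0 := by rw [← hAS, h, inner_zero_left]
      exact inner_self_eq_zero.mp h2
    · intro h
      rw [← hSA, ContinuousLinearMap.comp_apply, h, map_zero]
  have hmemS : ∀ x : H, S x ∈ (LinearMap.ker (A : H →ₗ[ℂ] H))ᗮ := by
    intro x
    rw [hker, Submodule.mem_orthogonal]
    intro u hu
    have hu0 : S u = 0 := hu
    rw [← hSinner u x, hu0, inner_zero_left]
  set P := Submodule.orthogonalProjectionOnto (LinearMap.ker (A : H →ₗ[ℂ] H))ᗮ with hP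
  have hcoe : ∀ x : H, (((P ∘L S) x : (LinearMap.ker (A : H →ₗ[ℂ] H))ᗮ) : H) = S x := by
    intro x
    rw [ContinuousLinearMap.comp_apply]
    exact Submodule.starProjection_eq_self_iff.mpr (hmemS x)
  have hXnorm : ∀ x : H, ‖(P ∘L S) x‖ = ‖S x‖ := by
    intro x
    conv_rhs => rw [← hcoe x]
    exact (Submodule.norm_coe _).symm
  have hn : ∀ x : H, ‖((P ∘L S) ∘L T) x‖ = ‖(P ∘L S) x‖ := by
    intro x
    rw [ContinuousLinearMap.comp_apply, hXnorm, hXnorm, hSnorm]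
  haveI : CompleteSpace ((LinearMap.ker (A : H →ₗ[ℂ] H))ᗮ) :=
    (Submodule.isClosed_orthogonal _).completeSpace_coe
  have hbot : (LinearMap.range ((P ∘L S) : H →ₗ[ℂ] (LinearMap.ker (A : H →ₗ[ℂ] H))ᗮ))ᗮ = ⊥ := by
    rw [Submodule.eq_bot_iff]
    intro u hu
    rw [Submodule.mem_orthogonal] at hu
    have hsu : ∀ x : H, (inner ℂ (S x) ((u : H)) : ℂ) = 0 := by
      intro x
      have h1 := hu ((P ∘L S) x) (LinearMap.mem_range.mpr ⟨x, rfl⟩)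
      rwa [Submodule.coe_inner, hcoe] at h1
    have h2 : S (u : H) = 0 := by
      have h3 := hsu (S (u : H))
      rw [hSinner (S (u : H)) (u : H)] at h3
      exact inner_self_eq_zero.mp h3
    have h4 : (u : H) ∈ LinearMap.ker (A : H →ₗ[ℂ] H) := hker.symm.le (LinearMap.mem_ker.mpr h2)
    have h5 : (inner ℂ ((u : H)) ((u : H)) : ℂ) =
        0 := (Submodule.mem_orthogonal _ _).mp u.2 _ h4
    exact Subtype.ext (inner_self_eq_zero.mp h5)
  have hdense : DenseRange ⇑(P ∘L S) := by
    have h1 : (LinearMap.range ((P ∘L S) : H →ₗ[ℂ] (LinearMap.ker (A : H →ₗ[ℂ] H))ᗮ)).topologicalClosure = ⊤ :=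
      Submodule.topologicalClosure_eq_top_iff.mpr hbot
    have h2 : Dense ((LinearMap.range ((P ∘L S) : H →ₗ[ℂ] (LinearMap.ker (A : H →ₗ[ℂ] H))ᗮ) : Submodule ℂ _) : Set (LinearMap.ker (A : H →ₗ[ℂ] H))ᗮ) :=
      Submodule.dense_iff_topologicalClosure_eq_top.mpr h1
    have h3 : Set.range ⇑(P ∘L S) = ((LinearMap.range ((P ∘L S) : H →ₗ[ℂ] (LinearMap.ker (A : H →ₗ[ℂ] H))ᗮ)) : Set _) := by
      ext w; simp [LinearMap.mem_range]
    rw [DenseRange, h3]; exact h2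
  exact key_extend (P ∘L S) ((P ∘L S) ∘L T) hdense hn
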